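/- Let Λ = ℤℓ[[T]] and let X be a finitely generated torsion Λ-module with characteristic power series χ satisfying χ(0) ≠ 0. Then the Herbrand quotient satisfies q(X) = 1/(ℤℓ : χ(0)ℤℓ), i.e. |X/TX| = |X[T]| · |ℤℓ/χ(0)ℤℓ|. -/

import Mathlib

set_option maxHeartbeats 1000000
set_option synthInstance.maxHeartbeats 200000

open PowerSeries

section Helpers

variable {p : ℕ} [Fact p.Prime]

/-- `ℤ_[p] ⧸ (a)` is finite for `a ≠ 0`. -/
lemma padic_quot_finite (a : ℤ_[p]) (ha : a ≠ 0) : Finite (ℤ_[p] ⧸ Ideal.span {a}) := by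
  obtain ⟨n, hn⟩ := PadicInt.ideal_eq_span_pow_p (s := Ideal.span {a})
    (by simpa [Ideal.span_singleton_eq_bot] using ha)
  rw [hn, ← PadicInt.ker_toZModPow]
  exact Finite.of_equiv _ (RingHom.quotientKerEquivOfSurjective
    (ZMod.ringHom_surjective _)).symm.toEquiv

lemma padic_quot_card_pos (a : ℤ_[p]) (ha : a ≠ 0) : 0 < Nat.card (ℤ_[p] ⧸ Ideal.span {a}) := by
  have h := padic_quot_finite a ha
  have hne : Nonempty (ℤ_[p] ⧸ Ideal.span {a}) := ⟨0⟩
  exact @Nat.card_pos _ hne h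

/-- Multiplicativity of the quotient card. -/
lemma padic_quot_card_mul (a b : ℤ_[p]) (ha : a ≠ 0) (hb : b ≠ 0) :
    Nat.card (ℤ_[p] ⧸ Ideal.span {a * b}) =
      Nat.card (ℤ_[p] ⧸ Ideal.span {a}) * Nat.card (ℤ_[p] ⧸ Ideal.span {b}) := by
  set A : AddSubgroup ℤ_[p] := (Ideal.span {a}).toAddSubgroup
  set AB : AddSubgroup ℤ_[p] := (Ideal.span {a * b}).toAddSubgroup
  have hle : AB ≤ A := by
    intro x hx
    exact Ideal.span_singleton_le_span_singleton.2 ⟨b, rfl⟩ hx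
  have key := AddSubgroup.relIndex_mul_index hle
  -- relIndex AB A = card (ℤ_[p] ⧸ span {b}) via x ↦ a * x
  have hrel : AB.relIndex A = Nat.card (ℤ_[p] ⧸ Ideal.span {b}) := by
    let g : ℤ_[p] →+ A :=
      { toFun := fun x => (⟨a * x, Ideal.mem_span_singleton.2 ⟨x, rfl⟩⟩ : A)
        map_zero' := by ext; simp
        map_add' := fun x y => by ext; simp [mul_add] }
    let ψ : ℤ_[p] →+ (A ⧸ AB.addSubgroupOf A) := (QuotientAddGroup.mk' _).comp g
    have hsurj : Function.Surjective ψ := by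
      intro y
      obtain ⟨⟨z, hz⟩, rfl⟩ := QuotientAddGroup.mk'_surjective _ y
      obtain ⟨x, rfl⟩ := Ideal.mem_span_singleton'.1 hz
      exact ⟨x, by simp [ψ, g, mul_comm]⟩
    have hker : ψ.ker = (Ideal.span {b}).toAddSubgroup := by
      ext x
      simp only [AddMonoidHom.mem_ker, ψ, AddMonoidHom.comp_apply,
        QuotientAddGroup.mk'_apply, QuotientAddGroup.eq_zero_iff]
      change a * x ∈ AB ↔ _
      constructor
      · intro hx
        obtain ⟨c, hc⟩ := Ideal.mem_span_singleton'.1 hx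
        have : x = c * b := mul_left_cancel₀ ha (by rw [← hc]; ring)
        exact Ideal.mem_span_singleton'.2 ⟨c, this.symm⟩
      · rintro hx
        obtain ⟨c, hc⟩ := Ideal.mem_span_singleton'.1 hx
        exact Ideal.mem_span_singleton'.2 ⟨c, by rw [← hc]; ring⟩
    have e := QuotientAddGroup.quotientKerEquivOfSurjective ψ hsurj
    have h1 : AB.relIndex A = ψ.ker.index := (Nat.card_congr e.toEquiv).symm
    rw [h1, congrArg AddSubgroup.index hker]
    rfl
  have hA : A.index = Nat.card (ℤ_[p] ⧸ Ideal.span {a}) := rfl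
  have hAB : AB.index = Nat.card (ℤ_[p] ⧸ Ideal.span {a * b}) := rfl
  rw [← hAB, ← key, hrel, hA, mul_comm]

/-- coker and ker of an endomorphism of a finite abelian group have the same size. -/
lemma index_range_eq_card_ker {G : Type*} [AddCommGroup G] [Finite G] (φ : G →+ G) :
    φ.range.index = Nat.card φ.ker := by
  have h1 : Nat.card G = φ.range.index * Nat.card φ.range :=
    AddSubgroup.card_eq_card_quotient_mul_card_addSubgroup _
  have h3 : Nat.card G = φ.ker.index * Nat.card φ.ker :=
    AddSubgroup.card_eq_card_quotient_mul_card_addSubgroup _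
  have h4 : φ.ker.index = Nat.card φ.range :=
    Nat.card_congr (QuotientAddGroup.quotientKerEquivRange φ).toEquiv
  have hpos : 0 < Nat.card φ.range := Nat.card_pos
  rw [h4] at h3
  have : φ.range.index * Nat.card φ.range = Nat.card φ.ker * Nat.card φ.range := by
    rw [← h1, h3]; ring
  exact Nat.eq_of_mul_eq_mul_right hpos this

end Helpers

section PS

variable {p : ℕ} [Fact p.Prime]

local notation "Λ" => PowerSeries ℤ_[p]

lemma padic_quot_card_prod {ι : Type*} (s : Finset ι) (a : ι → ℤ_[p]) (h : ∀ i ∈ s, a i ≠ 0) :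
    Nat.card (ℤ_[p] ⧸ Ideal.span {∏ i ∈ s, a i}) =
      ∏ i ∈ s, Nat.card (ℤ_[p] ⧸ Ideal.span {a i}) := by
  classical
  induction s using Finset.induction with
  | empty => simp [Ideal.span_singleton_one]
  | insert i s hx ih =>
    rw [Finset.prod_insert hx, Finset.prod_insert hx,
      padic_quot_card_mul _ _ (h i (Finset.mem_insert_self i s))
        (Finset.prod_ne_zero_iff.2 fun j hj => h j (Finset.mem_insert_of_mem hj)),
      ih fun j hj => h j (Finset.mem_insert_of_mem hj)]

/-- `Λ ⧸ (P)` has no `X`-torsion when `P(0) ≠ 0`. -/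
lemma quot_X_torsionfree (P : Λ) (hP : constantCoeff P ≠ 0)
    (e : Λ ⧸ Ideal.span {P}) (he : (X : Λ) • e = 0) : e = 0 := by
  obtain ⟨f, rfl⟩ := Ideal.Quotient.mk_surjective e
  have hx : (Ideal.Quotient.mk (Ideal.span {P})) (X * f) = 0 := by
    rw [← he]; rfl
  rw [Ideal.Quotient.eq_zero_iff_mem, Ideal.mem_span_singleton'] at hx
  obtain ⟨g, hg⟩ := hx
  have hg0 : constantCoeff g = 0 := by
    have h2 := congrArg (constantCoeff) hg
    simp only [map_mul, constantCoeff_X, zero_mul] at h2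
    rcases mul_eq_zero.1 h2 with h' | h'
    · exact h'
    · exact absurd h' hP
  obtain ⟨g', hg'⟩ := X_dvd_iff.2 hg0
  have h3 : X * (g' * P) = X * f := by rw [← mul_assoc, ← hg', hg]
  have hf : g' * P = f := mul_left_cancel₀ (X_ne_zero (R := ℤ_[p])) h3
  rw [Ideal.Quotient.eq_zero_iff_mem, Ideal.mem_span_singleton']
  exact ⟨g', hf⟩

/-- `|(Λ⧸(P)) ⧸ X•(Λ⧸(P))| = |ℤ_[p] ⧸ (P(0))|` when `P(0) ≠ 0`. -/
lemma quot_X_card (P : Λ) :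
    Nat.card ((Λ ⧸ Ideal.span {P}) ⧸
        LinearMap.range (LinearMap.lsmul Λ (Λ ⧸ Ideal.span {P}) X)) =
      Nat.card (ℤ_[p] ⧸ Ideal.span {constantCoeff P}) := by
  set I : Ideal Λ := Ideal.span {P}
  set J : Ideal ℤ_[p] := Ideal.span {constantCoeff P}
  have hvanish : ∀ a ∈ I, (Ideal.Quotient.mk J).comp (constantCoeff : Λ →+* ℤ_[p]) a = 0 := by
    intro a ha
    obtain ⟨c, hc⟩ := Ideal.mem_span_singleton'.1 ha
    rw [← hc, RingHom.comp_apply, map_mul, Ideal.Quotient.eq_zero_iff_mem]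
    exact Ideal.mul_mem_left _ _ (Ideal.mem_span_singleton_self _)
  let ψ0 : (Λ ⧸ I) →+* ℤ_[p] ⧸ J := Ideal.Quotient.lift I _ hvanish
  let ψ : (Λ ⧸ I) →+ ℤ_[p] ⧸ J := ψ0.toAddMonoidHom
  have hsurj : Function.Surjective ψ := by
    intro y
    obtain ⟨c, rfl⟩ := Ideal.Quotient.mk_surjective y
    exact ⟨Ideal.Quotient.mk I (C c), by simp [ψ, ψ0]⟩
  have hker : ψ.ker = (LinearMap.range (LinearMap.lsmul Λ (Λ ⧸ I) X)).toAddSubgroup := by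
    ext e
    obtain ⟨f, rfl⟩ := Ideal.Quotient.mk_surjective e
    simp only [AddMonoidHom.mem_ker, Submodule.mem_toAddSubgroup, LinearMap.mem_range]
    have hψ : ψ (Ideal.Quotient.mk I f) = Ideal.Quotient.mk J (constantCoeff f) := rfl
    rw [hψ]
    constructor
    · intro h
      rw [Ideal.Quotient.eq_zero_iff_mem] at h
      obtain ⟨c, hc⟩ := Ideal.mem_span_singleton'.1 h
      have h0 : constantCoeff (f - C c * P) = 0 := by
        simp [map_mul, hc]
      obtain ⟨g, hg⟩ := X_dvd_iff.2 h0
      refine ⟨Ideal.Quotient.mk I g, ?_⟩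
      have : LinearMap.lsmul Λ (Λ ⧸ I) X (Ideal.Quotient.mk I g) =
          Ideal.Quotient.mk I (X * g) := rfl
      rw [this, ← sub_eq_zero, ← map_sub, Ideal.Quotient.eq_zero_iff_mem]
      have : X * g - f = - (C c * P) := by rw [← hg]; ring
      rw [this]
      exact neg_mem (Ideal.mul_mem_left _ _ (Ideal.mem_span_singleton_self _))
    · rintro ⟨e', he'⟩
      obtain ⟨g, rfl⟩ := Ideal.Quotient.mk_surjective e'
      have h1 : Ideal.Quotient.mk I (X * g) = Ideal.Quotient.mk I f := he'
      rw [Ideal.Quotient.mk_eq_mk_iff_sub_mem] at h1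
      obtain ⟨c, hc⟩ := Ideal.mem_span_singleton'.1 h1
      have h2 : f = X * g - c * P := by linear_combination hc
      rw [Ideal.Quotient.eq_zero_iff_mem, h2]
      simp only [map_sub, map_mul, constantCoeff_X, zero_mul, zero_sub]
      exact neg_mem (Ideal.mul_mem_left _ _ (Ideal.mem_span_singleton_self _))
  have e := QuotientAddGroup.quotientKerEquivOfSurjective ψ hsurj
  have h1 : ψ.ker.index = Nat.card (ℤ_[p] ⧸ J) := Nat.card_congr e.toEquiv
  rw [← h1]
  show (LinearMap.range ((LinearMap.lsmul Λ (Λ ⧸ I)) X)).toAddSubgroup.index = ψ.ker.index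
  rw [hker]

end PS

section Abstract

variable {R : Type*} [CommRing R]

lemma range_lsmul_pi {ι : Type*} (Ms : ι → Type*) [∀ i, AddCommGroup (Ms i)]
    [∀ i, Module R (Ms i)] (r : R) :
    LinearMap.range (LinearMap.lsmul R (∀ i, Ms i) r) =
      Submodule.pi Set.univ (fun i => LinearMap.range (LinearMap.lsmul R (Ms i) r)) := by
  ext y
  simp only [LinearMap.mem_range, Submodule.mem_pi, Set.mem_univ, forall_true_left]
  constructor
  · rintro ⟨x, rfl⟩ i
    exact ⟨x i, rfl⟩
  · intro h
    choose x hx using h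
    exact ⟨x, funext hx⟩

/-- Step A: if `E` is `r`-torsion-free and `N ≤ E` has finite index, then
`[N : rN] = [E : rE]`. -/
lemma stepA {E : Type*} [AddCommGroup E] [Module R E] (r : R)
    (htf : ∀ e : E, r • e = 0 → e = 0) (N : Submodule R E) (hfin : Finite (E ⧸ N)) :
    ((N.toAddSubgroup.map (LinearMap.lsmul R E r).toAddMonoidHom).addSubgroupOf
        N.toAddSubgroup).index =
      (LinearMap.range (LinearMap.lsmul R E r)).toAddSubgroup.index := by
  set t := (LinearMap.lsmul R E r).toAddMonoidHom with ht
  set A := N.toAddSubgroup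
  set TA := A.map t
  set TE := t.range
  have hTA_A : TA ≤ A := by
    rintro _ ⟨a, ha, rfl⟩
    exact N.smul_mem r ha
  have hTA_TE : TA ≤ TE := by
    rintro _ ⟨a, _, rfl⟩
    exact ⟨a, rfl⟩
  have hTE : TE = (LinearMap.range (LinearMap.lsmul R E r)).toAddSubgroup := by
    ext x
    exact Iff.rfl
  have k1 := AddSubgroup.relIndex_mul_index hTA_A
  have k2 := AddSubgroup.relIndex_mul_index hTA_TE
  have k3 : TA.relIndex TE = A.index := by
    let φ : E →+ (TE ⧸ TA.addSubgroupOf TE) :=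
      (QuotientAddGroup.mk' _).comp t.rangeRestrict
    have hsurj : Function.Surjective φ :=
      (QuotientAddGroup.mk'_surjective _).comp t.rangeRestrict_surjective
    have hker : φ.ker = A := by
      ext e
      simp only [AddMonoidHom.mem_ker, φ, AddMonoidHom.comp_apply,
        QuotientAddGroup.mk'_apply, QuotientAddGroup.eq_zero_iff,
        AddSubgroup.mem_addSubgroupOf]
      constructor
      · rintro h
        obtain ⟨a, ha, hae⟩ := h
        have : r • (e - a) = 0 := by
          have : t a = t e := hae
          simp only [ht, LinearMap.toAddMonoidHom_coe, LinearMap.lsmul_apply] at this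
          rw [smul_sub, this, sub_self]
        have := htf _ this
        rw [sub_eq_zero] at this
        rwa [this]
      · intro he
        exact ⟨e, he, rfl⟩
    have e1 := QuotientAddGroup.quotientKerEquivOfSurjective φ hsurj
    have : φ.ker.index = Nat.card (TE ⧸ TA.addSubgroupOf TE) := Nat.card_congr e1.toEquiv
    rw [← congrArg AddSubgroup.index hker, this]
    rfl
  have hApos : 0 < A.index := by
    have h1 : A.index = Nat.card (E ⧸ N) := rfl
    have : Nonempty (E ⧸ N) := ⟨0⟩
    rw [h1]
    exact Nat.card_pos
  rw [k3] at k2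
  rw [← k2, mul_comm (A.index)] at k1
  rw [← hTE]
  exact Nat.eq_of_mul_eq_mul_right hApos k1

end Abstract

section StepB

variable {R : Type*} [CommRing R]

/-- Step B: if `f : M → E` has finite kernel and `E` is `r`-torsion-free, then
`[M : rM] = |M[r]| · [f(M) : r·f(M)]`. -/
lemma stepB {M E : Type*} [AddCommGroup M] [Module R M] [AddCommGroup E] [Module R E]
    (r : R) (htf : ∀ e : E, r • e = 0 → e = 0) (f : M →ₗ[R] E)
    (hK : Finite (LinearMap.ker f)) :
    (LinearMap.range (LinearMap.lsmul R M r)).toAddSubgroup.index =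
      Nat.card (LinearMap.ker (LinearMap.lsmul R M r)) *
        (((LinearMap.range f).toAddSubgroup.map (LinearMap.lsmul R E r).toAddMonoidHom
          ).addSubgroupOf (LinearMap.range f).toAddSubgroup).index := by
  set tM := (LinearMap.lsmul R M r).toAddMonoidHom with htM
  set TM := tM.range with hTMdef
  set K := (LinearMap.ker f).toAddSubgroup with hKdef
  set A := (LinearMap.range f).toAddSubgroup with hAdef
  set TA := A.map (LinearMap.lsmul R E r).toAddMonoidHom with hTAdef
  set B := K ⊔ TM with hBdef
  have hTM : (LinearMap.range (LinearMap.lsmul R M r)).toAddSubgroup = TM := by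
    ext x; exact Iff.rfl
  have hTMB : TM ≤ B := le_sup_right
  have k1 := AddSubgroup.relIndex_mul_index hTMB
  -- b2 : B.index = (TA.addSubgroupOf A).index
  have b2 : B.index = (TA.addSubgroupOf A).index := by
    let g : M →+ A :=
      { toFun := fun m => (⟨f m, ⟨m, rfl⟩⟩ : A)
        map_zero' := by ext; simp
        map_add' := fun x y => by ext; simp }
    let φ : M →+ (A ⧸ TA.addSubgroupOf A) := (QuotientAddGroup.mk' _).comp g
    have hsurj : Function.Surjective φ := by
      apply (QuotientAddGroup.mk'_surjective _).comp
      rintro ⟨_, m, rfl⟩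
      exact ⟨m, rfl⟩
    have hker : φ.ker = B := by
      ext m
      simp only [AddMonoidHom.mem_ker, φ, AddMonoidHom.comp_apply,
        QuotientAddGroup.mk'_apply, QuotientAddGroup.eq_zero_iff,
        AddSubgroup.mem_addSubgroupOf]
      constructor
      · intro h
        obtain ⟨a, ⟨m', rfl⟩, hae⟩ := h
        have hae' : r • f m' = f m := hae
        have hmem : m - r • m' ∈ K := by
          simp only [hKdef, Submodule.mem_toAddSubgroup, LinearMap.mem_ker, map_sub,
            map_smul, hae', sub_self]
        have hsum : m = (m - r • m') + r • m' := by abel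
        rw [hBdef, hsum]
        exact AddSubgroup.add_mem_sup hmem ⟨m', rfl⟩
      · intro hm
        obtain ⟨k, hk, _, ⟨m'', rfl⟩, rfl⟩ := AddSubgroup.mem_sup.1 hm
        have hk0 : f k = 0 := hk
        refine ⟨f m'', ⟨m'', rfl⟩, ?_⟩
        show r • f m'' = f (k + r • m'')
        rw [map_add, hk0, zero_add, map_smul]
    have e1 := QuotientAddGroup.quotientKerEquivOfSurjective φ hsurj
    have : φ.ker.index = (TA.addSubgroupOf A).index := Nat.card_congr e1.toEquiv
    rw [← congrArg AddSubgroup.index hker, this]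
  -- b3 : TM.relIndex B = card of r-torsion of M
  have b3 : TM.relIndex B = Nat.card (LinearMap.ker (LinearMap.lsmul R M r)) := by
    have e2 := QuotientAddGroup.quotientInfEquivSumNormalQuotient K TM
    have h1 : TM.relIndex B = Nat.card (K ⧸ TM.addSubgroupOf K) :=
      (Nat.card_congr e2.toEquiv).symm
    let φK : K →+ K :=
      { toFun := fun k => ⟨r • (k : M), by
          have hk : f (k : M) = 0 := k.2
          simp only [hKdef, Submodule.mem_toAddSubgroup, LinearMap.mem_ker, map_smul, hk,
            smul_zero]⟩
        map_zero' := by ext; simp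
        map_add' := fun x y => by ext; simp [smul_add] }
    have hrange : TM.addSubgroupOf K = φK.range := by
      ext k
      simp only [AddSubgroup.mem_addSubgroupOf, AddMonoidHom.mem_range]
      constructor
      · rintro ⟨m, hm⟩
        have hmK : f m = 0 := by
          have h3 : r • f m = 0 := by
            have h4 : f (tM m) = f (k : M) := congrArg f hm
            rw [k.2] at h4
            rw [← h4]
            show r • f m = f (r • m)
            rw [map_smul]
          exact htf _ h3
        exact ⟨⟨m, hmK⟩, Subtype.ext hm⟩
      · rintro ⟨m, rfl⟩
        exact ⟨(m : M), rfl⟩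
    haveI : Finite K := hK
    have h2 : Nat.card (K ⧸ TM.addSubgroupOf K) = Nat.card φK.ker := by
      show (TM.addSubgroupOf K).index = _
      rw [hrange]
      exact index_range_eq_card_ker φK
    have h3 : Nat.card φK.ker = Nat.card (LinearMap.ker (LinearMap.lsmul R M r)) := by
      have hmem1 : ∀ k : φK.ker, ((k : K) : M) ∈ LinearMap.ker (LinearMap.lsmul R M r) := by
        intro k
        have hk := AddMonoidHom.mem_ker.1 k.2
        have h5 := congrArg Subtype.val hk
        exact LinearMap.mem_ker.2 h5
      have hmem2 : ∀ m : LinearMap.ker (LinearMap.lsmul R M r), (m : M) ∈ K := by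
        intro m
        have hm : r • (m : M) = 0 := m.2
        have : r • f (m : M) = 0 := by rw [← map_smul, hm, map_zero]
        exact htf _ this
      have hmem3 : ∀ (m : LinearMap.ker (LinearMap.lsmul R M r)),
          (⟨(m : M), hmem2 m⟩ : K) ∈ φK.ker := by
        intro m
        refine AddMonoidHom.mem_ker.2 (Subtype.ext ?_)
        exact m.2
      exact Nat.card_congr
        { toFun := fun k => ⟨((k : K) : M), hmem1 k⟩
          invFun := fun m => ⟨⟨(m : M), hmem2 m⟩, hmem3 m⟩
          left_inv := fun k => Subtype.ext (Subtype.ext rfl)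
          right_inv := fun m => Subtype.ext rfl }
    rw [h1, h2, h3]
  rw [hTM, ← k1, b2, b3]

end StepB


/-- `χ` is a characteristic power series of the finitely generated torsion
`Λ = ℤ_[p][[T]]`-module `M`: by the structure theorem, `M` is pseudo-isomorphic
(i.e. admits a map with finite kernel and cokernel) to an elementary module
`⊕ᵢ Λ/(Pᵢ)` with the `Pᵢ` nonzero, and `χ = ∏ᵢ Pᵢ`. -/
def IsCharSeries (p : ℕ) [Fact p.Prime] (M : Type*) [AddCommGroup M]
    [Module (PowerSeries ℤ_[p]) M] (χ : PowerSeries ℤ_[p]) : Prop :=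
  ∃ (n : ℕ) (P : Fin n → PowerSeries ℤ_[p]),
    (∀ i, P i ≠ 0) ∧ χ = ∏ i, P i ∧
    ∃ f : M →ₗ[PowerSeries ℤ_[p]] (∀ i, PowerSeries ℤ_[p] ⧸ Ideal.span {P i}),
      Finite (LinearMap.ker f) ∧
      Finite ((∀ i, PowerSeries ℤ_[p] ⧸ Ideal.span {P i}) ⧸ LinearMap.range f)

/-- for a finitely generated torsion `Λ`-module `M` with characteristic
power series `χ` satisfying `χ(0) ≠ 0`, the Herbrand quotient is `1/(ℤ_[p] : χ(0)ℤ_[p])`,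
i.e. `|M/TM| = |M[T]| · |ℤ_[p]/χ(0)ℤ_[p]|`. -/
theorem stmt5 (p : ℕ) [Fact p.Prime]
    (M : Type*) [AddCommGroup M] [Module (PowerSeries ℤ_[p]) M]
    [Module.Finite (PowerSeries ℤ_[p]) M]
    (htors : Module.IsTorsion (PowerSeries ℤ_[p]) M)
    (χ : PowerSeries ℤ_[p]) (hχ : IsCharSeries p M χ)
    (h0 : PowerSeries.constantCoeff χ ≠ 0) :
    Nat.card (M ⧸ LinearMap.range (LinearMap.lsmul (PowerSeries ℤ_[p]) M PowerSeries.X)) =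
      Nat.card (LinearMap.ker (LinearMap.lsmul (PowerSeries ℤ_[p]) M PowerSeries.X)) *
        Nat.card (ℤ_[p] ⧸ Ideal.span {PowerSeries.constantCoeff χ}) := by
  classical
  obtain ⟨n, P, hPne, hχprod, f, hK, hC⟩ := hχ
  have hχ0 : constantCoeff χ = ∏ i, constantCoeff (P i) := by
    rw [hχprod, map_prod]
  have hPi0 : ∀ i, constantCoeff (P i) ≠ 0 := by
    intro i hi
    exact h0 (hχ0 ▸ Finset.prod_eq_zero (Finset.mem_univ i) hi)
  set E := ∀ i, PowerSeries ℤ_[p] ⧸ Ideal.span {P i} with hE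
  have htfE : ∀ e : E, (X : PowerSeries ℤ_[p]) • e = 0 → e = 0 := by
    intro e he
    funext i
    exact quot_X_torsionfree (P i) (hPi0 i) (e i) (congrFun he i)
  have hB := stepB (R := PowerSeries ℤ_[p]) X htfE f hK
  have hA := stepA (R := PowerSeries ℤ_[p]) X htfE (LinearMap.range f) hC
  have hEcard : (LinearMap.range (LinearMap.lsmul (PowerSeries ℤ_[p]) E X)).toAddSubgroup.index
      = Nat.card (ℤ_[p] ⧸ Ideal.span {constantCoeff χ}) := by
    have h1 : (LinearMap.range (LinearMap.lsmul (PowerSeries ℤ_[p]) E X)).toAddSubgroup.index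
        = Nat.card (E ⧸ LinearMap.range (LinearMap.lsmul (PowerSeries ℤ_[p]) E X)) := rfl
    rw [h1, range_lsmul_pi]
    rw [Nat.card_congr (Submodule.quotientPi
      (fun i => LinearMap.range (LinearMap.lsmul (PowerSeries ℤ_[p])
        (PowerSeries ℤ_[p] ⧸ Ideal.span {P i}) X))).toEquiv]
    rw [Nat.card_pi]
    rw [Finset.prod_congr rfl fun i _ => quot_X_card (P i)]
    rw [← padic_quot_card_prod Finset.univ _ fun i _ => hPi0 i, ← hχ0]
  calc Nat.card (M ⧸ LinearMap.range (LinearMap.lsmul (PowerSeries ℤ_[p]) M X))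
      = (LinearMap.range (LinearMap.lsmul (PowerSeries ℤ_[p]) M X)).toAddSubgroup.index := rfl
    _ = _ := by rw [hB, hA, hEcard]
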